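/- For ζ = (π/2)(ρα + iβ) with α, β, ρ real, ρ > 0, and q = e^{−ρπ}, one has Σ_{i=1}^4 ϑᵢ(ζ,q)·ϑᵢ(ζ̄,q) = √(2/ρ) · e^{−πα²ρ/2} · Σ_{(k,ℓ)∈ℤ²} e^{πα k} e^{πβ ℓ} e^{−π(k²/ρ + ρℓ²)/2}. -/

import Mathlib

open Complex

/-- `ϑ₁(ζ, q)` with `q = e^{-ρπ}`, half-integer powers `q^{(k+1/2)²} = e^{-ρπ(k+1/2)²}`. -/
noncomputable def theta1 (ζ : ℂ) (ρ : ℝ) : ℂ :=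
  ∑' k : ℤ, (-1 : ℂ) ^ k * Complex.I * Complex.exp ((2 * (k : ℂ) + 1) * Complex.I * ζ) *
    Complex.exp (-(ρ : ℂ) * (Real.pi : ℂ) * ((k : ℂ) + 1 / 2) ^ 2)

/-- `ϑ₂(ζ, q)` with `q = e^{-ρπ}`. -/
noncomputable def theta2 (ζ : ℂ) (ρ : ℝ) : ℂ :=
  ∑' k : ℤ, Complex.exp ((2 * (k : ℂ) + 1) * Complex.I * ζ) *
    Complex.exp (-(ρ : ℂ) * (Real.pi : ℂ) * ((k : ℂ) + 1 / 2) ^ 2)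

/-- `ϑ₃(ζ, q)` with `q = e^{-ρπ}`. -/
noncomputable def theta3 (ζ : ℂ) (ρ : ℝ) : ℂ :=
  ∑' k : ℤ, Complex.exp (2 * (k : ℂ) * Complex.I * ζ) *
    Complex.exp (-(ρ : ℂ) * (Real.pi : ℂ) * (k : ℂ) ^ 2)

/-- `ϑ₄(ζ, q)` with `q = e^{-ρπ}`. -/
noncomputable def theta4 (ζ : ℂ) (ρ : ℝ) : ℂ :=
  ∑' k : ℤ, (-1 : ℂ) ^ k * Complex.exp (2 * (k : ℂ) * Complex.I * ζ) *
    Complex.exp (-(ρ : ℂ) * (Real.pi : ℂ) * (k : ℂ) ^ 2)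

/-! ### Auxiliary definitions -/

noncomputable def zP (α β ρ : ℝ) : ℂ :=
  (Real.pi : ℂ) / 2 * ((ρ : ℂ) * (α : ℂ) + Complex.I * (β : ℂ))
noncomputable def zM (α β ρ : ℝ) : ℂ :=
  (Real.pi : ℂ) / 2 * ((ρ : ℂ) * (α : ℂ) - Complex.I * (β : ℂ))
noncomputable def Gt (α ρ : ℝ) (u : ℤ) : ℂ :=
  jacobiTheta₂_term u ((ρ : ℂ) * (α : ℂ)) (2 * (ρ : ℂ) * Complex.I)
noncomputable def Ht (β ρ : ℝ) (v : ℤ) : ℂ :=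
  jacobiTheta₂_term v ((β : ℂ) * Complex.I / 2) ((ρ : ℂ) * Complex.I / 2)

noncomputable def t1 (ζ : ℂ) (ρ : ℝ) (k : ℤ) : ℂ :=
  (-1 : ℂ) ^ k * Complex.I * Complex.exp ((2 * (k : ℂ) + 1) * Complex.I * ζ) *
    Complex.exp (-(ρ : ℂ) * (Real.pi : ℂ) * ((k : ℂ) + 1 / 2) ^ 2)
noncomputable def t2 (ζ : ℂ) (ρ : ℝ) (k : ℤ) : ℂ :=
  Complex.exp ((2 * (k : ℂ) + 1) * Complex.I * ζ) *
    Complex.exp (-(ρ : ℂ) * (Real.pi : ℂ) * ((k : ℂ) + 1 / 2) ^ 2)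
noncomputable def t3 (ζ : ℂ) (ρ : ℝ) (k : ℤ) : ℂ :=
  Complex.exp (2 * (k : ℂ) * Complex.I * ζ) *
    Complex.exp (-(ρ : ℂ) * (Real.pi : ℂ) * (k : ℂ) ^ 2)
noncomputable def t4 (ζ : ℂ) (ρ : ℝ) (k : ℤ) : ℂ :=
  (-1 : ℂ) ^ k * Complex.exp (2 * (k : ℂ) * Complex.I * ζ) *
    Complex.exp (-(ρ : ℂ) * (Real.pi : ℂ) * (k : ℂ) ^ 2)

noncomputable def tA (α ρ : ℝ) (k : ℤ) : ℂ :=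
  Complex.exp ((Real.pi : ℂ) * (α : ℂ) * (k : ℂ)) *
    Complex.exp (-(Real.pi : ℂ) * ((k : ℂ) ^ 2 / (ρ : ℂ)) / 2)
noncomputable def tB (β ρ : ℝ) (ℓ : ℤ) : ℂ :=
  Complex.exp ((Real.pi : ℂ) * (β : ℂ) * (ℓ : ℂ)) *
    Complex.exp (-(Real.pi : ℂ) * ((ρ : ℂ) * (ℓ : ℂ) ^ 2) / 2)

lemma theta1_eq (ζ : ℂ) (ρ : ℝ) : theta1 ζ ρ = ∑' k : ℤ, t1 ζ ρ k := rfl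
lemma theta2_eq (ζ : ℂ) (ρ : ℝ) : theta2 ζ ρ = ∑' k : ℤ, t2 ζ ρ k := rfl
lemma theta3_eq (ζ : ℂ) (ρ : ℝ) : theta3 ζ ρ = ∑' k : ℤ, t3 ζ ρ k := rfl
lemma theta4_eq (ζ : ℂ) (ρ : ℝ) : theta4 ζ ρ = ∑' k : ℤ, t4 ζ ρ k := rfl

/-! ### Summability -/

lemma summable_norm_jt {τ : ℂ} (hτ : 0 < τ.im) (z : ℂ) :
    Summable fun n : ℤ => ‖jacobiTheta₂_term n z τ‖ := by
  refine (summable_pow_mul_jacobiTheta₂_term_bound |z.im| hτ 0).of_nonneg_of_le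
    (fun _ => norm_nonneg _) fun n => ?_
  simpa using norm_jacobiTheta₂_term_le hτ (le_refl |z.im|) le_rfl n

lemma e3 (ρ : ℝ) (ζ : ℂ) (k : ℤ) :
    t3 ζ ρ k = jacobiTheta₂_term k (ζ / (Real.pi : ℂ)) ((ρ : ℂ) * Complex.I) := by
  rw [t3, jacobiTheta₂_term, ← Complex.exp_add]
  congr 1
  have hπ : (Real.pi : ℂ) ≠ 0 := Complex.ofReal_ne_zero.mpr Real.pi_ne_zero
  field_simp
  linear_combination (-(Real.pi:ℂ) * (k:ℂ)^2 * (ρ:ℂ)) * Complex.I_sq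

lemma e2 (ρ : ℝ) (ζ : ℂ) (k : ℤ) :
    t2 ζ ρ k = Complex.exp (Complex.I * ζ - (ρ : ℂ) * (Real.pi : ℂ) / 4) *
      jacobiTheta₂_term k (ζ / (Real.pi : ℂ) + (ρ : ℂ) * Complex.I / 2)
        ((ρ : ℂ) * Complex.I) := by
  rw [t2, jacobiTheta₂_term, ← Complex.exp_add, ← Complex.exp_add]
  congr 1
  have hπ : (Real.pi : ℂ) ≠ 0 := Complex.ofReal_ne_zero.mpr Real.pi_ne_zero
  field_simp
  linear_combination (-(16:ℂ) * (Real.pi:ℂ) * (ρ:ℂ) * ((k:ℂ) + (k:ℂ)^2)) * Complex.I_sq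

lemma imρI (ρ : ℝ) (hρ : 0 < ρ) : 0 < ((ρ : ℂ) * Complex.I).im := by
  simp [hρ]

lemma sumnorm3 (α β ρ : ℝ) (hρ : 0 < ρ) (ζ : ℂ) :
    Summable fun k : ℤ => ‖t3 ζ ρ k‖ := by
  simp_rw [e3 ρ ζ]
  exact summable_norm_jt (imρI ρ hρ) _

lemma sumnorm4 (α β ρ : ℝ) (hρ : 0 < ρ) (ζ : ℂ) :
    Summable fun k : ℤ => ‖t4 ζ ρ k‖ := by
  refine (sumnorm3 α β ρ hρ ζ).congr fun k => ?_
  simp [t3, t4, norm_mul, norm_zpow]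

lemma sumnorm2 (α β ρ : ℝ) (hρ : 0 < ρ) (ζ : ℂ) :
    Summable fun k : ℤ => ‖t2 ζ ρ k‖ := by
  simp_rw [e2 ρ ζ, norm_mul]
  exact (summable_norm_jt (imρI ρ hρ) _).mul_left _

lemma sumnorm1 (α β ρ : ℝ) (hρ : 0 < ρ) (ζ : ℂ) :
    Summable fun k : ℤ => ‖t1 ζ ρ k‖ := by
  refine (sumnorm2 α β ρ hρ ζ).congr fun k => ?_
  simp [t1, t2, norm_mul, norm_zpow]

/-! ### Sign folding -/

lemma sign_fold {s t a b c d z : ℂ} (hst : s * t = 1) (h : a * b * (c * d) = z) :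
    a * b * (c * d) + s * a * b * (t * c * d) = 2 * z := by
  have h2 : s * a * b * (t * c * d) = s * t * (a * b * (c * d)) := by ring
  rw [h2, hst, one_mul, h]; ring

lemma sign_fold12 {s t a b c d z : ℂ} (hst : s * t = -1) (h : a * b * (c * d) = z) :
    s * Complex.I * a * b * (t * Complex.I * c * d) + a * b * (c * d) = 2 * z := by
  have h2 : s * Complex.I * a * b * (t * Complex.I * c * d)
      = s * t * (Complex.I * Complex.I) * (a * b * (c * d)) := by ring
  rw [h2, hst, Complex.I_mul_I, h]; ring

/-! ### Pointwise identities -/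

lemma point34core (α β ρ : ℝ) (u w : ℤ) :
    Complex.exp (2 * ((u + w : ℤ) : ℂ) * Complex.I * zP α β ρ) *
      Complex.exp (-(ρ : ℂ) * (Real.pi : ℂ) * ((u + w : ℤ) : ℂ) ^ 2) *
    (Complex.exp (2 * ((u - w : ℤ) : ℂ) * Complex.I * zM α β ρ) *
      Complex.exp (-(ρ : ℂ) * (Real.pi : ℂ) * ((u - w : ℤ) : ℂ) ^ 2))
    = Gt α ρ u * Ht β ρ (2 * w) := by
  simp only [Gt, Ht, zP, zM, jacobiTheta₂_term]
  rw [← Complex.exp_add, ← Complex.exp_add, ← Complex.exp_add, ← Complex.exp_add]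
  congr 1
  push_cast
  linear_combination (-(2:ℂ) * (Real.pi:ℂ) * (ρ:ℂ) * ((u:ℂ)^2 + (w:ℂ)^2)) * Complex.I_sq

lemma point12core (α β ρ : ℝ) (u w : ℤ) :
    Complex.exp ((2 * ((u + w : ℤ) : ℂ) + 1) * Complex.I * zP α β ρ) *
      Complex.exp (-(ρ : ℂ) * (Real.pi : ℂ) * (((u + w : ℤ) : ℂ) + 1 / 2) ^ 2) *
    (Complex.exp ((2 * ((u - w - 1 : ℤ) : ℂ) + 1) * Complex.I * zM α β ρ) *
      Complex.exp (-(ρ : ℂ) * (Real.pi : ℂ) * (((u - w - 1 : ℤ) : ℂ) + 1 / 2) ^ 2))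
    = Gt α ρ u * Ht β ρ (2 * w + 1) := by
  simp only [Gt, Ht, zP, zM, jacobiTheta₂_term]
  rw [← Complex.exp_add, ← Complex.exp_add, ← Complex.exp_add, ← Complex.exp_add]
  congr 1
  push_cast
  linear_combination (-(Real.pi:ℂ) * (ρ:ℂ) * (2*(u:ℂ)^2 + 2*(w:ℂ) + 2*(w:ℂ)^2 + 1/2)) * Complex.I_sq

lemma point34 (α β ρ : ℝ) (u w : ℤ) :
    t3 (zP α β ρ) ρ (u + w) * t3 (zM α β ρ) ρ (u - w)
      + t4 (zP α β ρ) ρ (u + w) * t4 (zM α β ρ) ρ (u - w)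
    = 2 * (Gt α ρ u * Ht β ρ (2 * w)) := by
  have hsign : ((-1 : ℂ)) ^ (u + w) * (-1 : ℂ) ^ (u - w) = 1 := by
    rw [← zpow_add₀ (by norm_num : (-1 : ℂ) ≠ 0)]
    exact Even.neg_one_zpow ⟨u, by ring⟩
  simp only [t3, t4]
  exact sign_fold hsign (point34core α β ρ u w)

lemma point12 (α β ρ : ℝ) (u w : ℤ) :
    t1 (zP α β ρ) ρ (u + w) * t1 (zM α β ρ) ρ (u - w - 1)
      + t2 (zP α β ρ) ρ (u + w) * t2 (zM α β ρ) ρ (u - w - 1)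
    = 2 * (Gt α ρ u * Ht β ρ (2 * w + 1)) := by
  have hsign : ((-1 : ℂ)) ^ (u + w) * (-1 : ℂ) ^ (u - w - 1) = -1 := by
    rw [← zpow_add₀ (by norm_num : (-1 : ℂ) ≠ 0)]
    exact Odd.neg_one_zpow ⟨u - 1, by ring⟩
  simp only [t1, t2]
  exact sign_fold12 hsign (point12core α β ρ u w)

lemma hvan34 (α β ρ : ℝ) : ∀ m n : ℤ, Odd (m + n) →
    t3 (zP α β ρ) ρ m * t3 (zM α β ρ) ρ n + t4 (zP α β ρ) ρ m * t4 (zM α β ρ) ρ n = 0 := by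
  intro m n h
  have hsign : ((-1 : ℂ)) ^ m * (-1 : ℂ) ^ n = -1 := by
    rw [← zpow_add₀ (by norm_num : (-1 : ℂ) ≠ 0)]
    exact h.neg_one_zpow
  simp only [t3, t4]
  linear_combination (Complex.exp (2 * (m:ℂ) * Complex.I * zP α β ρ) *
    Complex.exp (-(ρ:ℂ) * (Real.pi:ℂ) * (m:ℂ)^2) *
    (Complex.exp (2 * (n:ℂ) * Complex.I * zM α β ρ) *
    Complex.exp (-(ρ:ℂ) * (Real.pi:ℂ) * (n:ℂ)^2))) * hsign

lemma hvan12 (α β ρ : ℝ) : ∀ m n : ℤ, Even (m + n) →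
    t1 (zP α β ρ) ρ m * t1 (zM α β ρ) ρ n + t2 (zP α β ρ) ρ m * t2 (zM α β ρ) ρ n = 0 := by
  intro m n h
  have hsign : ((-1 : ℂ)) ^ m * (-1 : ℂ) ^ n = 1 := by
    rw [← zpow_add₀ (by norm_num : (-1 : ℂ) ≠ 0)]
    exact Even.neg_one_zpow h
  simp only [t1, t2]
  linear_combination (Complex.I^2 * (Complex.exp ((2*(m:ℂ)+1) * Complex.I * zP α β ρ) *
      Complex.exp (-(ρ:ℂ) * (Real.pi:ℂ) * ((m:ℂ)+1/2)^2) *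
      (Complex.exp ((2*(n:ℂ)+1) * Complex.I * zM α β ρ) *
      Complex.exp (-(ρ:ℂ) * (Real.pi:ℂ) * ((n:ℂ)+1/2)^2)))) * hsign +
    (Complex.exp ((2*(m:ℂ)+1) * Complex.I * zP α β ρ) *
      Complex.exp (-(ρ:ℂ) * (Real.pi:ℂ) * ((m:ℂ)+1/2)^2) *
      (Complex.exp ((2*(n:ℂ)+1) * Complex.I * zM α β ρ) *
      Complex.exp (-(ρ:ℂ) * (Real.pi:ℂ) * ((n:ℂ)+1/2)^2))) * Complex.I_sq

lemma tsum_pair_even (f g f' g' : ℤ → ℂ)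
    (hvan : ∀ m n : ℤ, Odd (m + n) → f m * g n + f' m * g' n = 0) :
    (∑' q : ℤ × ℤ, (f q.1 * g q.2 + f' q.1 * g' q.2))
      = ∑' c : ℤ × ℤ, (f (c.1 + c.2) * g (c.1 - c.2) + f' (c.1 + c.2) * g' (c.1 - c.2)) := by
  have hinj : Function.Injective (fun c : ℤ × ℤ => ((c.1 + c.2, c.1 - c.2) : ℤ × ℤ)) := by
    intro a b h
    simp only [Prod.mk.injEq] at h
    exact Prod.ext (by omega) (by omega)
  refine (Function.Injective.tsum_eq hinj ?_).symm
  rintro ⟨m, n⟩ hp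
  rw [Function.mem_support] at hp
  rcases Int.even_or_odd (m + n) with he | ho
  · obtain ⟨c, hc⟩ := he
    exact ⟨(c, m - c), by simp only [Prod.mk.injEq]; omega⟩
  · exact absurd (hvan m n ho) hp

lemma tsum_pair_odd (f g f' g' : ℤ → ℂ)
    (hvan : ∀ m n : ℤ, Even (m + n) → f m * g n + f' m * g' n = 0) :
    (∑' q : ℤ × ℤ, (f q.1 * g q.2 + f' q.1 * g' q.2))
      = ∑' c : ℤ × ℤ, (f (c.1 + c.2) * g (c.1 - c.2 - 1) + f' (c.1 + c.2) * g' (c.1 - c.2 - 1)) := by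
  have hinj : Function.Injective (fun c : ℤ × ℤ => ((c.1 + c.2, c.1 - c.2 - 1) : ℤ × ℤ)) := by
    intro a b h
    simp only [Prod.mk.injEq] at h
    exact Prod.ext (by omega) (by omega)
  refine (Function.Injective.tsum_eq hinj ?_).symm
  rintro ⟨m, n⟩ hp
  rw [Function.mem_support] at hp
  rcases Int.even_or_odd (m + n) with he | ho
  · exact absurd (hvan m n he) hp
  · obtain ⟨c, hc⟩ := ho
    exact ⟨(c + 1, m - c - 1), by simp only [Prod.mk.injEq]; omega⟩

lemma tsum_split (F : ℤ × ℤ → ℂ) (hF : Summable F) :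
    (∑' q : ℤ × ℤ, F (q.1, 2 * q.2)) + (∑' q : ℤ × ℤ, F (q.1, 2 * q.2 + 1))
      = ∑' q : ℤ × ℤ, F q := by
  classical
  set s : Set (ℤ × ℤ) := {q | Even q.2} with hs
  have h0 : Function.Injective (fun q : ℤ × ℤ => ((q.1, 2 * q.2) : ℤ × ℤ)) := by
    intro a b h; simp only [Prod.mk.injEq] at h; exact Prod.ext h.1 (by omega)
  have h1 : Function.Injective (fun q : ℤ × ℤ => ((q.1, 2 * q.2 + 1) : ℤ × ℤ)) := by
    intro a b h; simp only [Prod.mk.injEq] at h; exact Prod.ext h.1 (by omega)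
  have hsum : ∑' q, F q = (∑' q, s.indicator F q) + ∑' q, sᶜ.indicator F q := by
    rw [← Summable.tsum_add (hF.indicator s) (hF.indicator sᶜ)]
    refine tsum_congr fun q => ?_
    conv_lhs => rw [← Set.indicator_self_add_compl s F]
    rfl
  have he : (∑' q, s.indicator F q) = ∑' q : ℤ × ℤ, F (q.1, 2 * q.2) := by
    rw [← Function.Injective.tsum_eq h0 (f := s.indicator F) ?_]
    · refine tsum_congr fun q => Set.indicator_of_mem ?_ F
      exact (⟨q.2, by ring⟩ : Even ((q.1, 2 * q.2) : ℤ × ℤ).2)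
    · rintro ⟨m, n⟩ hp
      rw [Function.mem_support] at hp
      have hmem : (⟨m, n⟩ : ℤ × ℤ) ∈ s := by
        by_contra hcon
        exact hp (Set.indicator_of_notMem hcon F)
      obtain ⟨c, hc⟩ := hmem
      have hc' : n = c + c := hc
      exact ⟨(m, c), Prod.ext rfl (show 2 * c = n by omega)⟩
  have ho : (∑' q, sᶜ.indicator F q) = ∑' q : ℤ × ℤ, F (q.1, 2 * q.2 + 1) := by
    rw [← Function.Injective.tsum_eq h1 (f := sᶜ.indicator F) ?_]
    · refine tsum_congr fun q => Set.indicator_of_mem ?_ F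
      show ¬ Even ((q.1, 2 * q.2 + 1) : ℤ × ℤ).2
      intro h; obtain ⟨c, hc⟩ := h; omega
    · rintro ⟨m, n⟩ hp
      rw [Function.mem_support] at hp
      have hmem : (⟨m, n⟩ : ℤ × ℤ) ∈ sᶜ := by
        by_contra hcon
        exact hp (Set.indicator_of_notMem hcon F)
      have hodd : Odd n := by
        rw [Set.mem_compl_iff] at hmem
        simpa [s, Int.not_even_iff_odd] using hmem
      obtain ⟨c, hc⟩ := hodd
      have hc' : n = 2 * c + 1 := hc
      exact ⟨(m, c), Prod.ext rfl (show 2 * c + 1 = n by omega)⟩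
  rw [hsum, he, ho]

/-! ### The four theta products as double sums -/

lemma pair34 (α β ρ : ℝ) (hρ : 0 < ρ) :
    theta3 (zP α β ρ) ρ * theta3 (zM α β ρ) ρ + theta4 (zP α β ρ) ρ * theta4 (zM α β ρ) ρ
      = ∑' c : ℤ × ℤ, 2 * (Gt α ρ c.1 * Ht β ρ (2 * c.2)) := by
  have h3p := sumnorm3 α β ρ hρ (zP α β ρ)
  have h3m := sumnorm3 α β ρ hρ (zM α β ρ)
  have h4p := sumnorm4 α β ρ hρ (zP α β ρ)
  have h4m := sumnorm4 α β ρ hρ (zM α β ρ)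
  calc theta3 (zP α β ρ) ρ * theta3 (zM α β ρ) ρ + theta4 (zP α β ρ) ρ * theta4 (zM α β ρ) ρ
      = (∑' z : ℤ × ℤ, t3 (zP α β ρ) ρ z.1 * t3 (zM α β ρ) ρ z.2)
        + ∑' z : ℤ × ℤ, t4 (zP α β ρ) ρ z.1 * t4 (zM α β ρ) ρ z.2 := by
        rw [theta3_eq, theta3_eq, theta4_eq, theta4_eq,
          tsum_mul_tsum_of_summable_norm h3p h3m, tsum_mul_tsum_of_summable_norm h4p h4m]
    _ = ∑' z : ℤ × ℤ, (t3 (zP α β ρ) ρ z.1 * t3 (zM α β ρ) ρ z.2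
        + t4 (zP α β ρ) ρ z.1 * t4 (zM α β ρ) ρ z.2) :=
        (Summable.tsum_add (summable_mul_of_summable_norm h3p h3m)
          (summable_mul_of_summable_norm h4p h4m)).symm
    _ = ∑' c : ℤ × ℤ, (t3 (zP α β ρ) ρ (c.1 + c.2) * t3 (zM α β ρ) ρ (c.1 - c.2)
        + t4 (zP α β ρ) ρ (c.1 + c.2) * t4 (zM α β ρ) ρ (c.1 - c.2)) :=
        tsum_pair_even _ _ _ _ (hvan34 α β ρ)
    _ = ∑' c : ℤ × ℤ, 2 * (Gt α ρ c.1 * Ht β ρ (2 * c.2)) :=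
        tsum_congr fun c => point34 α β ρ c.1 c.2

lemma pair12 (α β ρ : ℝ) (hρ : 0 < ρ) :
    theta1 (zP α β ρ) ρ * theta1 (zM α β ρ) ρ + theta2 (zP α β ρ) ρ * theta2 (zM α β ρ) ρ
      = ∑' c : ℤ × ℤ, 2 * (Gt α ρ c.1 * Ht β ρ (2 * c.2 + 1)) := by
  have h1p := sumnorm1 α β ρ hρ (zP α β ρ)
  have h1m := sumnorm1 α β ρ hρ (zM α β ρ)
  have h2p := sumnorm2 α β ρ hρ (zP α β ρ)
  have h2m := sumnorm2 α β ρ hρ (zM α β ρ)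
  calc theta1 (zP α β ρ) ρ * theta1 (zM α β ρ) ρ + theta2 (zP α β ρ) ρ * theta2 (zM α β ρ) ρ
      = (∑' z : ℤ × ℤ, t1 (zP α β ρ) ρ z.1 * t1 (zM α β ρ) ρ z.2)
        + ∑' z : ℤ × ℤ, t2 (zP α β ρ) ρ z.1 * t2 (zM α β ρ) ρ z.2 := by
        rw [theta1_eq, theta1_eq, theta2_eq, theta2_eq,
          tsum_mul_tsum_of_summable_norm h1p h1m, tsum_mul_tsum_of_summable_norm h2p h2m]
    _ = ∑' z : ℤ × ℤ, (t1 (zP α β ρ) ρ z.1 * t1 (zM α β ρ) ρ z.2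
        + t2 (zP α β ρ) ρ z.1 * t2 (zM α β ρ) ρ z.2) :=
        (Summable.tsum_add (summable_mul_of_summable_norm h1p h1m)
          (summable_mul_of_summable_norm h2p h2m)).symm
    _ = ∑' c : ℤ × ℤ, (t1 (zP α β ρ) ρ (c.1 + c.2) * t1 (zM α β ρ) ρ (c.1 - c.2 - 1)
        + t2 (zP α β ρ) ρ (c.1 + c.2) * t2 (zM α β ρ) ρ (c.1 - c.2 - 1)) :=
        tsum_pair_odd _ _ _ _ (hvan12 α β ρ)
    _ = ∑' c : ℤ × ℤ, 2 * (Gt α ρ c.1 * Ht β ρ (2 * c.2 + 1)) :=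
        tsum_congr fun c => point12 α β ρ c.1 c.2

/-! ### Recombining the two double sums -/

lemma sumGH (α β ρ : ℝ) (hρ : 0 < ρ) :
    (∑' c : ℤ × ℤ, 2 * (Gt α ρ c.1 * Ht β ρ (2 * c.2 + 1)))
      + (∑' c : ℤ × ℤ, 2 * (Gt α ρ c.1 * Ht β ρ (2 * c.2)))
    = 2 * ((∑' u : ℤ, Gt α ρ u) * ∑' v : ℤ, Ht β ρ v) := by
  have hG : Summable fun u : ℤ => ‖Gt α ρ u‖ := by
    refine summable_norm_jt ?_ _
    simp only [Complex.mul_im, Complex.mul_re, Complex.I_im, Complex.I_re,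
      Complex.ofReal_re, Complex.ofReal_im]
    norm_num
    linarith
  have hH : Summable fun v : ℤ => ‖Ht β ρ v‖ := by
    refine summable_norm_jt ?_ _
    simp only [Complex.div_im, Complex.mul_im, Complex.mul_re, Complex.I_im, Complex.I_re,
      Complex.ofReal_re, Complex.ofReal_im]
    norm_num
    linarith
  have hFs : Summable fun q : ℤ × ℤ => 2 * (Gt α ρ q.1 * Ht β ρ q.2) :=
    (summable_mul_of_summable_norm hG hH).mul_left 2
  have h1 : (∑' c : ℤ × ℤ, 2 * (Gt α ρ c.1 * Ht β ρ (2 * c.2)))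
      + (∑' c : ℤ × ℤ, 2 * (Gt α ρ c.1 * Ht β ρ (2 * c.2 + 1)))
      = ∑' q : ℤ × ℤ, 2 * (Gt α ρ q.1 * Ht β ρ q.2) := tsum_split _ hFs
  rw [add_comm, h1, tsum_mul_left, ← tsum_mul_tsum_of_summable_norm hG hH]

/-! ### The theta transformation -/

lemma sqrt_fact (ρ : ℝ) (hρ : 0 < ρ) :
    (Real.sqrt (2 / ρ) : ℂ) * (Real.sqrt (2 * ρ) : ℂ) = 2 := by
  rw [← Complex.ofReal_mul, ← Real.sqrt_mul (by positivity : (0:ℝ) ≤ 2 / ρ)]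
  rw [show 2 / ρ * (2 * ρ) = 4 by field_simp; ring]
  rw [show (4:ℝ) = 2 ^ 2 by norm_num, Real.sqrt_sq (by norm_num : (0:ℝ) ≤ 2)]
  norm_num

lemma tA_eq (α ρ : ℝ) (hρ : 0 < ρ) (k : ℤ) :
    tA α ρ k = jacobiTheta₂_term k (-(α : ℂ) * Complex.I / 2)
      ((((2 * ρ)⁻¹ : ℝ) : ℂ) * Complex.I) := by
  rw [tA, jacobiTheta₂_term, ← Complex.exp_add]
  congr 1
  have hρ' : (ρ : ℂ) ≠ 0 := Complex.ofReal_ne_zero.mpr hρ.ne'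
  push_cast
  field_simp
  linear_combination ((2:ℂ)*(k:ℂ)*(α:ℂ)*(ρ:ℂ) - (k:ℂ)^2) * Complex.I_sq

lemma Gval (α ρ : ℝ) (hρ : 0 < ρ) :
    2 * (∑' u : ℤ, Gt α ρ u)
      = (Real.sqrt (2 / ρ) : ℂ) * Complex.exp (-(Real.pi : ℂ) * (α : ℂ) ^ 2 * (ρ : ℂ) / 2) *
        ∑' k : ℤ, tA α ρ k := by
  have hρ' : (ρ : ℂ) ≠ 0 := Complex.ofReal_ne_zero.mpr hρ.ne'
  have h1 : (∑' u : ℤ, Gt α ρ u) = jacobiTheta₂ ((ρ : ℂ) * (α : ℂ)) (2 * (ρ : ℂ) * Complex.I) :=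
    rfl
  rw [h1, jacobiTheta₂_functional_equation]
  have hfac : -Complex.I * (2 * (ρ : ℂ) * Complex.I) = ((2 * ρ : ℝ) : ℂ) := by
    push_cast
    linear_combination (-(2:ℂ) * (ρ:ℂ)) * Complex.I_sq
  rw [hfac]
  have hpow : ((2 * ρ : ℝ) : ℂ) ^ (1 / 2 : ℂ) = (Real.sqrt (2 * ρ) : ℂ) := by
    rw [show ((1:ℂ)/2) = ((1/2 : ℝ) : ℂ) by norm_num]
    rw [← Complex.ofReal_cpow (by positivity)]
    rw [← Real.sqrt_eq_rpow]
  rw [hpow]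
  have hexp : -(Real.pi : ℂ) * Complex.I * ((ρ : ℂ) * (α : ℂ)) ^ 2 / (2 * (ρ : ℂ) * Complex.I)
      = -(Real.pi : ℂ) * (α : ℂ) ^ 2 * (ρ : ℂ) / 2 := by
    field_simp
  rw [hexp]
  have hsum2 : jacobiTheta₂ ((ρ : ℂ) * (α : ℂ) / (2 * (ρ : ℂ) * Complex.I))
      (-1 / (2 * (ρ : ℂ) * Complex.I)) = ∑' k : ℤ, tA α ρ k := by
    rw [jacobiTheta₂]
    refine tsum_congr fun k => ?_
    rw [jacobiTheta₂_term, tA, ← Complex.exp_add]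
    congr 1
    field_simp
  rw [hsum2]
  have hs := sqrt_fact ρ hρ
  have h0 : (Real.sqrt (2 * ρ) : ℂ) ≠ 0 := by
    exact_mod_cast (Real.sqrt_pos.mpr (by positivity : (0:ℝ) < 2 * ρ)).ne'
  set S := ∑' k : ℤ, tA α ρ k
  set E := Complex.exp (-(Real.pi : ℂ) * (α : ℂ) ^ 2 * (ρ : ℂ) / 2)
  set c := (Real.sqrt (2 * ρ) : ℂ)
  set d := (Real.sqrt (2 / ρ) : ℂ)
  field_simp
  linear_combination (-(E * S)) * hs

/-! ### The right-hand side -/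

lemma tB_eq (β ρ : ℝ) (ℓ : ℤ) : tB β ρ ℓ = Ht β ρ (-ℓ) := by
  rw [tB, Ht, jacobiTheta₂_term, ← Complex.exp_add]
  congr 1
  push_cast
  linear_combination ((Real.pi:ℂ)*(β:ℂ)*(ℓ:ℂ) - (Real.pi:ℂ)*(ℓ:ℂ)^2*(ρ:ℂ)/2) * Complex.I_sq

lemma HB (β ρ : ℝ) : (∑' ℓ : ℤ, tB β ρ ℓ) = ∑' v : ℤ, Ht β ρ v := by
  calc (∑' ℓ : ℤ, tB β ρ ℓ) = ∑' ℓ : ℤ, Ht β ρ (-ℓ) := tsum_congr fun ℓ => tB_eq β ρ ℓ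
    _ = ∑' v : ℤ, Ht β ρ v := (Equiv.neg ℤ).tsum_eq _

/-- For `ζ = (π/2)(ρα + iβ)` and `q = e^{-ρπ}`,
`Σ_{i=1}^4 ϑᵢ(ζ,q)ϑᵢ(ζ̄,q) = √(2/ρ) e^{-πα²ρ/2} Σ_{(k,ℓ)} e^{παk} e^{πβℓ} e^{-π(k²/ρ+ρℓ²)/2}`. -/
theorem sum_theta_products_gaussian (α β ρ : ℝ) (hρ : 0 < ρ) :
    theta1 ((Real.pi : ℂ) / 2 * ((ρ : ℂ) * (α : ℂ) + Complex.I * (β : ℂ))) ρ *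
        theta1 ((Real.pi : ℂ) / 2 * ((ρ : ℂ) * (α : ℂ) - Complex.I * (β : ℂ))) ρ +
      theta2 ((Real.pi : ℂ) / 2 * ((ρ : ℂ) * (α : ℂ) + Complex.I * (β : ℂ))) ρ *
        theta2 ((Real.pi : ℂ) / 2 * ((ρ : ℂ) * (α : ℂ) - Complex.I * (β : ℂ))) ρ +
      theta3 ((Real.pi : ℂ) / 2 * ((ρ : ℂ) * (α : ℂ) + Complex.I * (β : ℂ))) ρ *
        theta3 ((Real.pi : ℂ) / 2 * ((ρ : ℂ) * (α : ℂ) - Complex.I * (β : ℂ))) ρ +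
      theta4 ((Real.pi : ℂ) / 2 * ((ρ : ℂ) * (α : ℂ) + Complex.I * (β : ℂ))) ρ *
        theta4 ((Real.pi : ℂ) / 2 * ((ρ : ℂ) * (α : ℂ) - Complex.I * (β : ℂ))) ρ =
    (Real.sqrt (2 / ρ) : ℂ) * Complex.exp (-(Real.pi : ℂ) * (α : ℂ) ^ 2 * (ρ : ℂ) / 2) *
      ∑' p : ℤ × ℤ,
        Complex.exp ((Real.pi : ℂ) * (α : ℂ) * (p.1 : ℂ)) *
          Complex.exp ((Real.pi : ℂ) * (β : ℂ) * (p.2 : ℂ)) *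
          Complex.exp (-(Real.pi : ℂ) * ((p.1 : ℂ) ^ 2 / (ρ : ℂ) + (ρ : ℂ) * (p.2 : ℂ) ^ 2) / 2) := by
  have hρ' : (ρ : ℂ) ≠ 0 := Complex.ofReal_ne_zero.mpr hρ.ne'
  have hH : Summable fun v : ℤ => ‖Ht β ρ v‖ := by
    refine summable_norm_jt ?_ _
    simp only [Complex.div_im, Complex.mul_im, Complex.mul_re, Complex.I_im, Complex.I_re,
      Complex.ofReal_re, Complex.ofReal_im]
    norm_num
    linarith
  have hA : Summable fun k : ℤ => ‖tA α ρ k‖ := by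
    simp_rw [tA_eq α ρ hρ]
    refine summable_norm_jt ?_ _
    simp only [Complex.mul_im, Complex.mul_re, Complex.I_im, Complex.I_re,
      Complex.ofReal_re, Complex.ofReal_im]
    norm_num
    positivity
  have hB : Summable fun ℓ : ℤ => ‖tB β ρ ℓ‖ := by
    simp_rw [tB_eq β ρ]
    exact hH.comp_injective neg_injective
  have hRHS : (∑' p : ℤ × ℤ, Complex.exp ((Real.pi : ℂ) * (α : ℂ) * (p.1 : ℂ)) *
        Complex.exp ((Real.pi : ℂ) * (β : ℂ) * (p.2 : ℂ)) *
        Complex.exp (-(Real.pi : ℂ) * ((p.1 : ℂ) ^ 2 / (ρ : ℂ) + (ρ : ℂ) * (p.2 : ℂ) ^ 2) / 2))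
      = (∑' k : ℤ, tA α ρ k) * ∑' ℓ : ℤ, tB β ρ ℓ := by
    rw [tsum_mul_tsum_of_summable_norm hA hB]
    refine tsum_congr fun p => ?_
    simp only [tA, tB, ← Complex.exp_add]
    congr 1
    field_simp
    ring
  show theta1 (zP α β ρ) ρ * theta1 (zM α β ρ) ρ + theta2 (zP α β ρ) ρ * theta2 (zM α β ρ) ρ
      + theta3 (zP α β ρ) ρ * theta3 (zM α β ρ) ρ + theta4 (zP α β ρ) ρ * theta4 (zM α β ρ) ρ
    = (Real.sqrt (2 / ρ) : ℂ) * Complex.exp (-(Real.pi : ℂ) * (α : ℂ) ^ 2 * (ρ : ℂ) / 2) *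
      ∑' p : ℤ × ℤ,
        Complex.exp ((Real.pi : ℂ) * (α : ℂ) * (p.1 : ℂ)) *
          Complex.exp ((Real.pi : ℂ) * (β : ℂ) * (p.2 : ℂ)) *
          Complex.exp (-(Real.pi : ℂ) * ((p.1 : ℂ) ^ 2 / (ρ : ℂ) + (ρ : ℂ) * (p.2 : ℂ) ^ 2) / 2)
  rw [add_assoc, pair12 α β ρ hρ, pair34 α β ρ hρ, sumGH α β ρ hρ, hRHS, HB β ρ]
  linear_combination (∑' v : ℤ, Ht β ρ v) * Gval α ρ hρ
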